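/- Every non-empty graph G with minimum degree at least 3 contains a dominating K_4-model. -/

import Mathlib

open SimpleGraph

namespace DomK4

variable {V : Type*} {G : SimpleGraph V}

/-- Reachability within a set of allowed vertices. -/
def ReachIn (G : SimpleGraph V) (X : Set V) (a b : V) : Prop :=
  ∃ p : G.Walk a b, ∀ x ∈ p.support, x ∈ X

/-- A cycle, given as a list of ≥ 3 distinct consecutively adjacent vertices,
with last adjacent to head. -/
def IsCyc (G : SimpleGraph V) (l : List V) : Prop :=
  3 ≤ l.length ∧ l.Nodup ∧ l.Chain' G.Adj ∧
    ∀ h : l ≠ [], G.Adj (l.getLast h) (l.head h)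

lemma reachIn_left {X : Set V} {a b : V} (h : ReachIn G X a b) : a ∈ X := by
  obtain ⟨p, hp⟩ := h; exact hp a p.start_mem_support

lemma reachIn_right {X : Set V} {a b : V} (h : ReachIn G X a b) : b ∈ X := by
  obtain ⟨p, hp⟩ := h; exact hp b p.end_mem_support

lemma reachIn_refl {X : Set V} {a : V} (h : a ∈ X) : ReachIn G X a a :=
  ⟨Walk.nil, by simp [h]⟩

lemma reachIn_symm {X : Set V} {a b : V} (h : ReachIn G X a b) : ReachIn G X b a := by
  obtain ⟨p, hp⟩ := h
  exact ⟨p.reverse, by intro x hx; rw [Walk.support_reverse] at hx; exact hp x (by simpa using hx)⟩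

lemma reachIn_trans {X : Set V} {a b c : V} (h1 : ReachIn G X a b) (h2 : ReachIn G X b c) :
    ReachIn G X a c := by
  obtain ⟨p, hp⟩ := h1; obtain ⟨q, hq⟩ := h2
  refine ⟨p.append q, ?_⟩
  intro x hx
  rw [Walk.mem_support_append_iff] at hx
  rcases hx with hx | hx
  · exact hp x hx
  · exact hq x hx

lemma reachIn_mono {X Y : Set V} (hXY : X ⊆ Y) {a b : V} (h : ReachIn G X a b) :
    ReachIn G Y a b := by
  obtain ⟨p, hp⟩ := h; exact ⟨p, fun x hx => hXY (hp x hx)⟩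

lemma reachIn_adj {X : Set V} {a b : V} (hadj : G.Adj a b) (ha : a ∈ X) (hb : b ∈ X) :
    ReachIn G X a b :=
  ⟨Walk.cons hadj Walk.nil, by intro x hx; simp at hx; rcases hx with h|h <;> subst h <;> assumption⟩

lemma reachIn_reachable {X : Set V} {a b : V} (h : ReachIn G X a b) : G.Reachable a b := by
  obtain ⟨p, _⟩ := h; exact ⟨p⟩

lemma reachIn_snoc {X : Set V} {a b c : V} (h : ReachIn G X a b) (hadj : G.Adj b c)
    (hc : c ∈ X) : ReachIn G X a c :=
  reachIn_trans h (reachIn_adj hadj (reachIn_right h) hc)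


/-- Connectivity of an induced subgraph from set-internal reachability. -/
lemma connected_of_reachIn {S : Set V} (hne : S.Nonempty)
    (h : ∀ x ∈ S, ∀ y ∈ S, ReachIn G S x y) : (G.induce S).Connected := by
  have key : ∀ (a b : V) (p : G.Walk a b), (∀ x ∈ p.support, x ∈ S) →
      ∀ (ha : a ∈ S) (hb : b ∈ S), (G.induce S).Reachable ⟨a, ha⟩ ⟨b, hb⟩ := by
    intro a b p
    induction p with
    | nil => intro _ ha hb; rfl
    | @cons u v w huv q ih =>
      intro hp ha hb
      have hv : v ∈ S := hp v (by simp [Walk.support_cons])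
      have hq : ∀ x ∈ q.support, x ∈ S := fun x hx => hp x (by simp [Walk.support_cons, hx])
      have h1 : (G.induce S).Adj ⟨u, ha⟩ ⟨v, hv⟩ := huv
      exact (h1.reachable).trans (ih hq hv hb)
  rw [SimpleGraph.connected_iff]
  refine ⟨?_, ⟨⟨hne.choose, hne.choose_spec⟩⟩⟩
  rintro ⟨x, hx⟩ ⟨y, hy⟩
  obtain ⟨p, hp⟩ := h x hx y hy
  exact key x y p hp hx hy

/-- Crossing lemma: a walk from inside A to outside A crosses the boundary. -/
lemma exists_boundary {A : Set V} {a b : V} (ha : a ∈ A) (hb : b ∉ A)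
    (h : G.Reachable a b) : ∃ u, u ∉ A ∧ ∃ c ∈ A, G.Adj c u := by
  obtain ⟨p⟩ := h
  induction p with
  | nil => exact absurd ha hb
  | @cons u v w huv q ih =>
    by_cases hv : v ∈ A
    · exact ih hv hb
    · exact ⟨v, hv, u, ha, huv⟩

/-- All members of a chain list are `ReachIn` the list from the head. -/
lemma chain_reachIn_head : ∀ (l : List V), l.Chain' G.Adj →
    ∀ (hne : l ≠ []) (x : V), x ∈ l → ReachIn G {v | v ∈ l} (l.head hne) x := by
  intro l
  induction l with
  | nil => intro _ hne; exact absurd rfl hne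
  | cons a t ih =>
    intro hc _ x hx
    rcases List.mem_cons.mp hx with rfl | hxt
    · exact ⟨Walk.nil, by simp⟩
    · obtain ⟨b, t', rfl⟩ : ∃ b t', t = b :: t' := by
        cases t with
        | nil => simp at hxt
        | cons b t' => exact ⟨b, t', rfl⟩
      have hab : G.Adj a b := (List.isChain_cons_cons.mp hc).1
      have hct : (b :: t').Chain' G.Adj := (List.isChain_cons_cons.mp hc).2
      have := ih hct (by simp) x hxt
      have hmono : {v | v ∈ b :: t'} ⊆ {v | v ∈ a :: b :: t'} := by
        intro v hv; simp at hv ⊢; tauto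
      have h2 : ReachIn G {v | v ∈ a :: b :: t'} b x := by
        refine reachIn_mono hmono ?_
        simpa using this
      exact reachIn_trans (reachIn_adj hab (by simp) (by simp)) h2

lemma chain_reachIn {l : List V} (hc : l.Chain' G.Adj) {x y : V} (hx : x ∈ l) (hy : y ∈ l) :
    ReachIn G {v | v ∈ l} x y := by
  have hne : l ≠ [] := List.ne_nil_of_mem hx
  have h1 := chain_reachIn_head (G := G) l hc hne x hx
  have h2 := chain_reachIn_head (G := G) l hc hne y hy
  exact reachIn_trans (reachIn_symm h1) h2
/-- Cycle extraction from a set of min internal degree ≥ 2. -/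
lemma exists_cyc [Fintype V] {Y : Set V} (hne : Y.Nonempty)
    (hdeg : ∀ v ∈ Y, ∃ u₁ u₂, u₁ ∈ Y ∧ u₂ ∈ Y ∧ u₁ ≠ u₂ ∧ G.Adj v u₁ ∧ G.Adj v u₂) :
    ∃ l, IsCyc G l ∧ ∀ x ∈ l, x ∈ Y := by
  classical
  set P : List V → Prop := fun l => l ≠ [] ∧ l.Nodup ∧ l.Chain' G.Adj ∧ ∀ x ∈ l, x ∈ Y with hP
  obtain ⟨y, hy⟩ := hne
  have hP0 : P [y] := ⟨by simp, by simp, List.isChain_singleton _, by simpa using hy⟩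
  set S : Set ℕ := {n | ∃ l, P l ∧ l.length = n} with hS
  have hSne : S.Nonempty := ⟨1, [y], hP0, rfl⟩
  have hSb : BddAbove S := ⟨Fintype.card V, by rintro n ⟨l, hl, rfl⟩; exact hl.2.1.length_le_card⟩
  obtain ⟨l, hl, hlen⟩ := Nat.sSup_mem hSne hSb
  have hmax : ∀ l', P l' → l'.length ≤ l.length := by
    intro l' h'
    rw [hlen]; exact le_csSup hSb ⟨l', h', rfl⟩
  obtain ⟨hlne, hnd, hch, hmem⟩ := hl
  obtain ⟨h, t, rfl⟩ : ∃ h t, l = h :: t := by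
    cases l with
    | nil => exact absurd rfl hlne
    | cons h t => exact ⟨h, t, rfl⟩
  have hhY : h ∈ Y := hmem h (by simp)
  obtain ⟨u₁, u₂, hu₁Y, hu₂Y, hne12, hadj1, hadj2⟩ := hdeg h hhY
  have hext : ∀ u, u ∈ Y → G.Adj h u → u ∈ h :: t := by
    intro u huY hadj
    by_contra hul
    have hPu : P (u :: h :: t) := by
      refine ⟨by simp, by simp [hnd, hul], ?_, ?_⟩
      · exact List.isChain_cons_cons.mpr ⟨hadj.symm, hch⟩
      · intro x hx
        rcases List.mem_cons.mp hx with rfl | hx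
        · exact huY
        · exact hmem x hx
    have := hmax _ hPu
    simp at this
  have hu₁l : u₁ ∈ h :: t := hext u₁ hu₁Y hadj1
  have hu₂l : u₂ ∈ h :: t := hext u₂ hu₂Y hadj2
  obtain ⟨b, t', rfl⟩ : ∃ b t', t = b :: t' := by
    cases t with
    | nil =>
      exfalso
      have : u₁ = h := by simpa [hadj1.ne'] using hu₁l
      exact hadj1.ne' this
    | cons b t' => exact ⟨b, t', rfl⟩
  obtain ⟨c, hcl, hcb, hadjc⟩ : ∃ c, c ∈ h :: b :: t' ∧ c ≠ b ∧ G.Adj h c := by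
    by_cases h1 : u₁ = b
    · exact ⟨u₂, hu₂l, by rw [← h1]; exact hne12.symm, hadj2⟩
    · exact ⟨u₁, hu₁l, h1, hadj1⟩
  obtain ⟨⟨j, hj⟩, hget⟩ := List.mem_iff_get.mp hcl
  have hj0 : j ≠ 0 := by
    intro h0; subst h0
    exact hadjc.ne (by simpa using hget)
  have hj1 : j ≠ 1 := by
    intro h1; subst h1
    have : b = c := hget
    exact hcb this.symm
  have hj2 : 2 ≤ j := by omega
  have hlen' : ((h :: b :: t').take (j+1)).length = j + 1 := by
    rw [List.length_take]; omega
  have hne' : ((h :: b :: t').take (j+1)) ≠ [] := by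
    intro hcon; rw [hcon] at hlen'; simp at hlen'
  have hhead : ((h :: b :: t').take (j+1)).head hne' = h := by
    have h1 : ((h :: b :: t').take (j+1)).head? = some h := by
      rw [List.take_succ_cons]; rfl
    rw [List.head?_eq_head hne'] at h1
    exact Option.some_injective _ h1
  have hlast : ((h :: b :: t').take (j+1)).getLast hne' = c := by
    rw [List.getLast_eq_getElem, List.getElem_take, ← hget, List.get_eq_getElem]
    congr 1
    simp [hlen']
    simp at hj; omega
  refine ⟨(h :: b :: t').take (j + 1), ⟨?_, ?_, ?_, ?_⟩, ?_⟩
  · rw [List.length_take]; omega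
  · exact (List.take_sublist _ _).nodup hnd
  · exact hch.take _
  · intro hne''
    rw [hhead, hlast]
    exact hadjc.symm
  · intro x hx
    exact hmem x ((List.take_sublist _ _).mem hx)

lemma two_of_ncard {s : Set V} [Fintype V] (h : 2 ≤ s.ncard) :
    ∃ a b, a ∈ s ∧ b ∈ s ∧ a ≠ b := by
  have := (Set.one_lt_ncard_iff s.toFinite).mp (by omega)
  exact this

lemma ncard_diff_singleton_ge {s : Set V} [Fintype V] (a : V) :
    s.ncard - 1 ≤ (s \ {a}).ncard := by
  have h1 : s ⊆ insert a (s \ {a}) := by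
    intro x hx
    by_cases hxa : x = a
    · simp [hxa]
    · exact Set.mem_insert_of_mem _ ⟨hx, hxa⟩
  have h2 : s.ncard ≤ (insert a (s \ {a})).ncard := Set.ncard_le_ncard h1 (Set.toFinite _)
  have h3 : (insert a (s \ {a})).ncard ≤ (s \ {a}).ncard + 1 := Set.ncard_insert_le _ _
  omega

/-- Seed: a set of min internal degree ≥ 3 contains a cycle together with
an extra adjacent vertex. -/
lemma seed [Fintype V] :
    ∀ (n : ℕ) (S : Set V), S.ncard ≤ n → S.Nonempty →
      (∀ v ∈ S, 3 ≤ {u | u ∈ S ∧ G.Adj v u}.ncard) →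
      ∃ l, IsCyc G l ∧ (∀ x ∈ l, x ∈ S) ∧ ∃ w, w ∈ S ∧ w ∉ l ∧ ∃ z ∈ l, G.Adj w z := by
  intro n
  induction n with
  | zero =>
    intro S hcard hne _
    exfalso
    have := Set.ncard_pos (Set.toFinite S) |>.mpr hne
    omega
  | succ n ih =>
    intro S hcard hne hdeg
    classical
    obtain ⟨z₀, hz₀⟩ := hne
    set S' : Set V := S \ {z₀} with hS'
    have hS'sub : S' ⊆ S := Set.diff_subset
    have hS'ne : S'.Nonempty := by
      have h3 := hdeg z₀ hz₀
      have : {u | u ∈ S ∧ G.Adj z₀ u}.Nonempty := by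
        apply Set.nonempty_of_ncard_ne_zero; omega
      obtain ⟨u, huS, hadj⟩ := this
      exact ⟨u, huS, by simp [hadj.ne']⟩
    have hdeg' : ∀ v ∈ S', ∃ u₁ u₂, u₁ ∈ S' ∧ u₂ ∈ S' ∧ u₁ ≠ u₂ ∧ G.Adj v u₁ ∧ G.Adj v u₂ := by
      intro v hv
      have h3 := hdeg v (hS'sub hv)
      have hsub : {u | u ∈ S ∧ G.Adj v u} \ {z₀} ⊆ {u | u ∈ S' ∧ G.Adj v u} := by
        rintro u ⟨⟨huS, hadj⟩, huz⟩
        exact ⟨⟨huS, huz⟩, hadj⟩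
      have h1 : 2 ≤ ({u | u ∈ S ∧ G.Adj v u} \ {z₀}).ncard := by
        have := ncard_diff_singleton_ge (s := {u | u ∈ S ∧ G.Adj v u}) z₀
        omega
      have h2 : 2 ≤ {u | u ∈ S' ∧ G.Adj v u}.ncard :=
        le_trans h1 (Set.ncard_le_ncard hsub (Set.toFinite _))
      obtain ⟨a, b, ha, hb, hab⟩ := two_of_ncard h2
      exact ⟨a, b, ha.1, hb.1, hab, ha.2, hb.2⟩
    obtain ⟨l, hcyc, hlS'⟩ := exists_cyc hS'ne hdeg'
    by_cases hcase : ∃ w, w ∈ S ∧ w ∉ l ∧ ∃ z ∈ l, G.Adj w z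
    · exact ⟨l, hcyc, fun x hx => hS'sub (hlS' x hx), hcase⟩
    · push_neg at hcase
      set Y : Set V := {x | x ∈ l} with hY
      have hYS' : Y ⊆ S' := fun x hx => hlS' x hx
      have hYne : Y.Nonempty := by
        obtain ⟨hlen, _, _, _⟩ := hcyc
        cases l with
        | nil => simp at hlen
        | cons a t => exact ⟨a, by simp [hY]⟩
      have hYdeg : ∀ v ∈ Y, 3 ≤ {u | u ∈ Y ∧ G.Adj v u}.ncard := by
        intro v hv
        have hsub : {u | u ∈ S ∧ G.Adj v u} ⊆ {u | u ∈ Y ∧ G.Adj v u} := by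
          rintro u ⟨huS, hadj⟩
          refine ⟨?_, hadj⟩
          by_contra hul
          exact (hcase u huS hul v hv) hadj.symm
        exact le_trans (hdeg v (hS'sub (hYS' hv))) (Set.ncard_le_ncard hsub (Set.toFinite _))
      have hYlt : Y.ncard ≤ n := by
        have hss : Y ⊂ S := by
          refine ⟨fun x hx => hS'sub (hYS' hx), fun hcon => ?_⟩
          have : z₀ ∈ Y := hcon hz₀
          exact (hYS' this).2 rfl
        have := Set.ncard_lt_ncard hss (Set.toFinite S)
        omega
      obtain ⟨l', hcyc', hl'Y, w, hwY, hwl', z, hzl', hadj⟩ := ih Y hYlt hYne hYdeg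
      exact ⟨l', hcyc', fun x hx => hS'sub (hYS' (hl'Y x hx)),
        w, hS'sub (hYS' hwY), hwl', z, hzl', hadj⟩

/-- Rotating a cycle to start at a chosen vertex. -/
lemma isCyc_rotate {l : List V} (hcyc : IsCyc G l) {z : V} (hz : z ∈ l) :
    ∃ s : List V, IsCyc G (z :: s) ∧ (∀ x, x ∈ z :: s ↔ x ∈ l) ∧ (z :: s).length = l.length := by
  classical
  obtain ⟨l₁, l₂, rfl⟩ := List.append_of_mem hz
  obtain ⟨hlen, hnd, hch, hcl⟩ := hcyc
  by_cases hl₁ : l₁ = []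
  · subst hl₁
    refine ⟨l₂ ++ [], ?_, by simp, by simp⟩
    rw [List.append_nil]
    exact ⟨by simpa using hlen, by simpa using hnd, by simpa using hch,
      by simpa using hcl⟩
  · have hnd' : (z :: (l₂ ++ l₁)).Nodup := by
      have h1 := List.nodup_middle.mp hnd
      rw [List.nodup_cons] at h1 ⊢
      exact ⟨by simpa [List.mem_append, or_comm] using h1.1, List.nodup_append_comm.mp h1.2⟩
    have hchspl := List.isChain_append.mp hch
    obtain ⟨hch1, hch2, hlink⟩ := hchspl
    have hcne : (z :: l₂ : List V) ≠ [] := List.cons_ne_nil _ _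
    have hlne : (l₁ ++ z :: l₂ : List V) ≠ [] := by simp
    -- closing adjacency of the original cycle, in concrete form
    have hlast0 : (l₁ ++ z :: l₂).getLast hlne = (z :: l₂).getLast hcne := by
      rw [List.getLast_append]
      simp
    have hhead0 : (l₁ ++ z :: l₂).head hlne = l₁.head hl₁ := by
      rw [List.head_append]
      simp [hl₁]
    have hcl' : G.Adj ((z :: l₂).getLast hcne) (l₁.head hl₁) := by
      have := hcl hlne
      rwa [hlast0, hhead0] at this
    have hlink' : G.Adj (l₁.getLast hl₁) z := by
      have := hlink (l₁.getLast hl₁) (List.getLast?_eq_getLast hl₁ ▸ rfl) z rfl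
      exact this
    have hch' : (z :: (l₂ ++ l₁)).Chain' G.Adj := by
      show ((z :: l₂) ++ l₁).Chain' G.Adj
      refine List.isChain_append.mpr ?_
      refine ⟨hch2, hch1, ?_⟩
      intro x hx y hy
      rw [List.getLast?_eq_getLast hcne] at hx
      rw [List.head?_eq_head hl₁] at hy
      simp at hx hy
      subst hx; subst hy
      exact hcl'
    refine ⟨l₂ ++ l₁, ⟨by simp at hlen ⊢; omega, hnd', hch', ?_⟩,
      by intro x; simp [List.mem_append, List.mem_cons]; tauto, by simp; omega⟩
    intro hne''
    have h1 : (z :: (l₂ ++ l₁)).getLast hne'' = l₁.getLast hl₁ := by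
      show ((z :: l₂) ++ l₁).getLast (by simp) = _
      rw [List.getLast_append]
      simp [hl₁]
    rw [h1]
    show G.Adj _ z
    exact hlink'

lemma reachIn_pathlist [DecidableEq V] {X : Set V} {a b : V} (h : ReachIn G X a b) :
    ∃ L : List V, L.Chain' G.Adj ∧ L.Nodup ∧ (∀ x ∈ L, x ∈ X) ∧
      ∃ hne : L ≠ [], L.head hne = a ∧ L.getLast hne = b := by
  obtain ⟨p, hp⟩ := h
  exact ⟨p.bypass.support, p.bypass.isChain_adj_support, (p.bypass_isPath).support_nodup,
    fun x hx => hp x (p.support_bypass_subset hx), p.bypass.support_ne_nil,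
    p.bypass.head_support, p.bypass.getLast_support⟩

lemma trim_to_first (ZS : Set V) :
    ∀ (L : List V) (hne : L ≠ []), L.Chain' G.Adj → L.Nodup →
      L.getLast hne ∈ ZS →
      ∃ (P : List V) (hPne : P ≠ []), P.Chain' G.Adj ∧ P.Nodup ∧ (∀ x ∈ P, x ∈ L) ∧
        P.head hPne = L.head hne ∧ P.getLast hPne ∈ ZS ∧ ∀ x ∈ P.dropLast, x ∉ ZS := by
  classical
  intro L
  induction L with
  | nil => intro hne; exact absurd rfl hne
  | cons a rest ih =>
    intro _ hch hnd hlast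
    by_cases haZ : a ∈ ZS
    · refine ⟨[a], by simp, List.isChain_singleton _, by simp, by simp, rfl, by simpa using haZ, by simp⟩
    · have hrne : rest ≠ [] := by
        intro hcon; subst hcon; simp at hlast; exact haZ hlast
      have hch' : rest.Chain' G.Adj := (List.isChain_cons.mp hch).2
      have hlast' : rest.getLast hrne ∈ ZS := by
        rwa [List.getLast_cons hrne] at hlast
      obtain ⟨P', hP'ne, hP'ch, hP'nd, hP'mem, hP'head, hP'last, hP'drop⟩ :=
        ih hrne hch' (hnd.of_cons) hlast'
      refine ⟨a :: P', by simp, ?_, ?_, ?_, ?_, ?_, ?_⟩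
      · refine List.isChain_cons.mpr ?_
        refine ⟨?_, hP'ch⟩
        intro y hy
        rw [List.head?_eq_head hP'ne] at hy
        simp at hy; subst hy
        rw [hP'head]
        have := (List.isChain_cons.mp hch).1
        exact this _ (by rw [List.head?_eq_head hrne]; rfl)
      · rw [List.nodup_cons]
        exact ⟨fun hmem => (List.nodup_cons.mp hnd).1 (hP'mem a hmem), hP'nd⟩
      · intro x hx
        rcases List.mem_cons.mp hx with rfl | hx
        · simp
        · exact List.mem_cons_of_mem _ (hP'mem x hx)
      · rfl
      · rw [List.getLast_cons hP'ne]; exact hP'last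
      · rw [List.dropLast_cons_of_ne_nil hP'ne]
        intro x hx
        rcases List.mem_cons.mp hx with rfl | hx
        · exact haZ
        · exact hP'drop x hx

lemma exists_max_fam [Fintype V] (P : Set V → Prop) (hne : ∃ A, P A) :
    ∃ A, P A ∧ ∀ B, P B → B.ncard ≤ A.ncard := by
  set S : Set ℕ := {n | ∃ A, P A ∧ A.ncard = n} with hS
  obtain ⟨A₀, hA₀⟩ := hne
  have hSne : S.Nonempty := ⟨A₀.ncard, A₀, hA₀, rfl⟩
  have hSb : BddAbove S := by
    refine ⟨Fintype.card V, ?_⟩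
    rintro n ⟨A, hA, rfl⟩
    have := Set.ncard_le_ncard (Set.subset_univ A) (Set.toFinite _)
    rwa [Set.ncard_univ, Nat.card_eq_fintype_card] at this
  obtain ⟨A, hA, hcard⟩ := Nat.sSup_mem hSne hSb
  exact ⟨A, hA, fun B hB => hcard ▸ le_csSup hSb ⟨B, hB, rfl⟩⟩

lemma exists_min_list (P : List V → Prop) (hne : ∃ l, P l) :
    ∃ l, P l ∧ ∀ l', P l' → l.length ≤ l'.length := by
  set S : Set ℕ := {n | ∃ l, P l ∧ l.length = n} with hS
  obtain ⟨l₀, hl₀⟩ := hne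
  have hSne : S.Nonempty := ⟨l₀.length, l₀, hl₀, rfl⟩
  obtain ⟨l, hl, hcard⟩ := Nat.sInf_mem hSne
  exact ⟨l, hl, fun l' hl' => hcard ▸ Nat.sInf_le ⟨l', hl', rfl⟩⟩

/-- Every reach-class with internal min degree ≥ 2 contains a cycle. -/
lemma class_cycle [Fintype V] {X : Set V} {ζ : V} (hζ : ζ ∈ X)
    (hdeg : ∀ v, ReachIn G X ζ v → 2 ≤ {u | u ∈ X ∧ G.Adj v u}.ncard) :
    ∃ l, IsCyc G l ∧ ∀ x ∈ l, ReachIn G X ζ x := by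
  set W : Set V := {v | ReachIn G X ζ v} with hW
  have hWne : W.Nonempty := ⟨ζ, reachIn_refl hζ⟩
  have hWdeg : ∀ v ∈ W, ∃ u₁ u₂, u₁ ∈ W ∧ u₂ ∈ W ∧ u₁ ≠ u₂ ∧ G.Adj v u₁ ∧ G.Adj v u₂ := by
    intro v hv
    obtain ⟨a, b, ha, hb, hab⟩ := two_of_ncard (hdeg v hv)
    exact ⟨a, b, reachIn_snoc hv ha.2 ha.1, reachIn_snoc hv hb.2 hb.1, hab, ha.2, hb.2⟩
  obtain ⟨l, hcyc, hmem⟩ := exists_cyc hWne hWdeg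
  exact ⟨l, hcyc, hmem⟩

lemma two_distinct_of_nodup {l : List V} (hnd : l.Nodup) (hlen : 2 ≤ l.length) :
    ∃ a b, a ∈ l ∧ b ∈ l ∧ a ≠ b := by
  obtain ⟨x, t, rfl⟩ : ∃ x t, l = x :: t := by
    cases l with
    | nil => simp at hlen
    | cons x t => exact ⟨x, t, rfl⟩
  obtain ⟨y, t', rfl⟩ : ∃ y t', t = y :: t' := by
    cases t with
    | nil => simp at hlen
    | cons y t' => exact ⟨y, t', rfl⟩
  exact ⟨x, y, by simp, by simp, by rintro rfl; simp at hnd⟩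

lemma mem_eq_dropLast_or_getLast {l : List V} (hne : l ≠ []) {x : V} (hx : x ∈ l) :
    x ∈ l.dropLast ∨ x = l.getLast hne := by
  conv at hx => rw [← List.dropLast_append_getLast hne]
  rcases List.mem_append.mp hx with h | h
  · exact Or.inl h
  · exact Or.inr (by simpa using h)

lemma two_le_length_of_head_ne_getLast {l : List V} (hne : l ≠ [])
    (h : l.head hne ≠ l.getLast hne) : 2 ≤ l.length := by
  cases l with
  | nil => exact absurd rfl hne
  | cons a t =>
    cases t with
    | nil => simp at h
    | cons b t' => simp

lemma getLast_congr {l : List V} {v : V} (hne : l ≠ []) (h : l.getLast? = some v) :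
    l.getLast hne = v := by
  rw [List.getLast?_eq_getLast hne] at h
  exact Option.some_injective _ h

end DomK4

open DomK4



/-- A *dominating K_t-model* in a graph G is a sequence (T 0, ..., T (t-1)) of pairwise
disjoint non-empty connected subgraphs of G such that for all i < j, every vertex of T j
has a neighbour (in G) in T i. -/
def SimpleGraph.IsDomKtModel {V : Type*} (G : SimpleGraph V) (t : ℕ) (T : Fin t → Set V) : Prop :=
  (∀ i, (T i).Nonempty) ∧
  (Pairwise fun i j => Disjoint (T i) (T j)) ∧
  (∀ i, (G.induce (T i)).Connected) ∧
  (∀ i j : Fin t, i < j → ∀ v ∈ T j, ∃ u ∈ T i, G.Adj v u)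

/-- G contains a dominating K_t-model. -/
def SimpleGraph.HasDomKtModel {V : Type*} (G : SimpleGraph V) (t : ℕ) : Prop :=
  ∃ T : Fin t → Set V, G.IsDomKtModel t T

/-- Every non-empty graph with minimum degree at least 3 contains a dominating K_4-model. -/
theorem hasDomK4Model_of_minDegree_ge_three {V : Type*} [Fintype V] [Nonempty V]
    (G : SimpleGraph V) [DecidableRel G.Adj] (h : ∀ v, 3 ≤ G.degree v) :
    G.HasDomKtModel 4 := by
  classical
  have hdeg3 : ∀ v : V, 3 ≤ {u | G.Adj v u}.ncard := by
    intro v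
    have h1 : {u | G.Adj v u} = G.neighborSet v := rfl
    rw [h1, ← Nat.card_coe_set_eq, Nat.card_eq_fintype_card,
      SimpleGraph.card_neighborSet_eq_degree]
    exact h v
  set Fam : Set V → Prop := fun A => A.Nonempty ∧ (∀ x ∈ A, ∀ y ∈ A, ReachIn G A x y) ∧
      ∃ l, IsCyc G l ∧ (∀ x ∈ l, x ∉ A) ∧ ∃ x ∈ l, ∃ a ∈ A, G.Reachable a x with hFam
  -- the family is non-empty
  have hfam0 : ∃ A, Fam A := by
    have hseed := seed (G := G) (Fintype.card V) Set.univ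
      (le_of_eq (by rw [Set.ncard_univ, Nat.card_eq_fintype_card])) Set.univ_nonempty
      (by intro v _; simpa using hdeg3 v)
    obtain ⟨l, hcyc, _, w, _, hwl, z, hzl, hadj⟩ := hseed
    exact ⟨{w}, ⟨w, rfl⟩, by rintro x rfl y rfl; exact reachIn_refl rfl,
      l, hcyc, by rintro x hx rfl; exact hwl hx, z, hzl, w, rfl, hadj.reachable⟩
  obtain ⟨A, hfamA, hmaxA⟩ := exists_max_fam Fam hfam0
  obtain ⟨hAne, hAconn, hcycex⟩ := hfamA
  set Bd : Set V := {u | u ∉ A ∧ ∃ a ∈ A, G.Adj a u} with hBd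
  -- maximality: no cycle outside A ∪ {u} reachable from A, for boundary u
  have claimA : ∀ u ∈ Bd, ∀ l, IsCyc G l → (∀ x ∈ l, x ∉ A ∧ x ≠ u) →
      (∃ x ∈ l, ∃ a ∈ A, G.Reachable a x) → False := by
    intro u hu l hl hmem hreach
    obtain ⟨huA, a₀, ha₀A, hadj₀⟩ := hu
    have hfamB : Fam (insert u A) := by
      refine ⟨⟨u, Set.mem_insert _ _⟩, ?_, l, hl, ?_, ?_⟩
      · have hua : ReachIn G (insert u A) a₀ u :=
          reachIn_adj hadj₀ (Set.mem_insert_of_mem _ ha₀A) (Set.mem_insert _ _)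
        have hAins : ∀ x ∈ A, ∀ y ∈ A, ReachIn G (insert u A) x y := fun x hx y hy =>
          reachIn_mono (Set.subset_insert _ _) (hAconn x hx y hy)
        have key : ∀ y ∈ A, ReachIn G (insert u A) u y := fun y hy =>
          reachIn_trans (reachIn_symm hua) (hAins a₀ ha₀A y hy)
        intro x hx y hy
        rcases Set.mem_insert_iff.mp hx with hxu | hxA
        · rcases Set.mem_insert_iff.mp hy with hyu | hyA
          · rw [hxu, hyu]; exact reachIn_refl (Set.mem_insert _ _)
          · rw [hxu]; exact key y hyA
        · rcases Set.mem_insert_iff.mp hy with hyu | hyA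
          · rw [hyu]; exact reachIn_symm (key x hxA)
          · exact hAins x hxA y hyA
      · intro x hx hcon
        rcases Set.mem_insert_iff.mp hcon with rfl | hxA
        · exact (hmem x hx).2 rfl
        · exact (hmem x hx).1 hxA
      · obtain ⟨x, hx, a, haA, hr⟩ := hreach
        exact ⟨x, hx, a, Set.mem_insert_of_mem _ haA, hr⟩
    have hle := hmaxA _ hfamB
    rw [Set.ncard_insert_of_notMem huA (Set.toFinite A)] at hle
    omega
  -- minimal reachable cycle outside A
  set Q : List V → Prop := fun l => IsCyc G l ∧ (∀ x ∈ l, x ∉ A) ∧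
      ∃ x ∈ l, ∃ a ∈ A, G.Reachable a x with hQ
  obtain ⟨Z, hQZ, hminZ⟩ := exists_min_list Q hcycex
  obtain ⟨hZcyc, hZA, x₀, hx₀Z, a₀, ha₀A, hr₀⟩ := hQZ
  have hZreach : ∀ x ∈ Z, ∃ a ∈ A, G.Reachable a x := by
    intro x hx
    refine ⟨a₀, ha₀A, hr₀.trans ?_⟩
    exact reachIn_reachable (chain_reachIn hZcyc.2.2.1 hx₀Z hx)
  have hBdZ : ∀ u ∈ Bd, u ∈ Z := by
    intro u hu
    by_contra huZ
    exact claimA u hu Z hZcyc (fun x hx => ⟨hZA x hx, fun hcon => huZ (hcon ▸ hx)⟩)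
      ⟨x₀, hx₀Z, a₀, ha₀A, hr₀⟩
  have hBdne : Bd.Nonempty := by
    obtain ⟨u, huA, c, hcA, hadj⟩ := exists_boundary ha₀A (hZA x₀ hx₀Z) hr₀
    exact ⟨u, huA, c, hcA, hadj⟩
  have hBd2 : ∃ u₁ u₂, u₁ ∈ Bd ∧ u₂ ∈ Bd ∧ u₁ ≠ u₂ := by
    by_contra hcon
    push_neg at hcon
    obtain ⟨w, hw⟩ := hBdne
    have hBdw : ∀ u ∈ Bd, u = w := fun u hu => by
      by_contra hne
      exact hne (hcon u w hu hw)
    have hlen2 : 2 ≤ Z.length := le_trans (by norm_num) hZcyc.1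
    obtain ⟨a, b, haZ, hbZ, hab⟩ := two_distinct_of_nodup hZcyc.2.1 hlen2
    obtain ⟨ζ, hζZ, hζw⟩ : ∃ ζ, ζ ∈ Z ∧ ζ ≠ w := by
      by_cases h1 : a = w
      · exact ⟨b, hbZ, by rw [← h1]; exact hab.symm⟩
      · exact ⟨a, haZ, h1⟩
    set X : Set V := {v | v ∉ A ∧ v ≠ w} with hX
    have hζX : ζ ∈ X := ⟨hZA ζ hζZ, hζw⟩
    have hdegX : ∀ v, ReachIn G X ζ v → 2 ≤ {u | u ∈ X ∧ G.Adj v u}.ncard := by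
      intro v hv
      have hvX : v ∈ X := reachIn_right hv
      have hvBd : v ∉ Bd := fun hmem => hvX.2 (hBdw v hmem)
      have hnbrA : ∀ u, G.Adj v u → u ∉ A := by
        intro u hadj huA
        exact hvBd ⟨hvX.1, u, huA, hadj.symm⟩
      have hsub : {u | G.Adj v u} \ {w} ⊆ {u | u ∈ X ∧ G.Adj v u} := by
        rintro u ⟨hadj, huw⟩
        exact ⟨⟨hnbrA u hadj, by simpa using huw⟩, hadj⟩
      have h1 := ncard_diff_singleton_ge (s := {u | G.Adj v u}) w
      have h2 := Set.ncard_le_ncard hsub (Set.toFinite _)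
      have h3 := hdeg3 v
      omega
    obtain ⟨l, hlcyc, hlW⟩ := class_cycle hζX hdegX
    refine claimA w hw l hlcyc ?_ ?_
    · intro x hx
      have hxX : x ∈ X := reachIn_right (hlW x hx)
      exact ⟨hxX.1, hxX.2⟩
    · obtain ⟨x, hx⟩ : ∃ x, x ∈ l := by
        obtain ⟨hlen3, _, _, _⟩ := hlcyc
        cases l with
        | nil => simp at hlen3
        | cons x t => exact ⟨x, by simp⟩
      obtain ⟨aa, haaA, hraa⟩ := hZreach ζ hζZ
      exact ⟨x, hx, aa, haaA, hraa.trans (reachIn_reachable (hlW x hx))⟩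
  have hZBd : ∀ z ∈ Z, z ∈ Bd := by
    intro z hzZ
    by_contra hzBd
    have hzA : z ∉ A := hZA z hzZ
    have hnbrA : ∀ u, G.Adj z u → u ∉ A := fun u hadj huA => hzBd ⟨hzA, u, huA, hadj.symm⟩
    obtain ⟨s, hcycZ', hmemZ', hlenZ'⟩ := isCyc_rotate hZcyc hzZ
    obtain ⟨hlen', hnd', hch', hcl'⟩ := hcycZ'
    have hsne : s ≠ [] := by
      intro hcon; subst hcon; simp at hlen'
    have hslen2 : 2 ≤ s.length := by
      simp only [List.length_cons] at hlen'; omega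
    have hzs : z ∉ s := (List.nodup_cons.mp hnd').1
    have hsnd : s.Nodup := (List.nodup_cons.mp hnd').2
    have hsZ : ∀ x ∈ s, x ∈ Z := fun x hx => (hmemZ' x).mp (List.mem_cons_of_mem z hx)
    have hsA : ∀ x ∈ s, x ∉ A := fun x hx => hZA x (hsZ x hx)
    have hchs : s.Chain' G.Adj := (List.isChain_cons.mp hch').2
    have hzhead : G.Adj z (s.head hsne) := by
      have h1 := (List.isChain_cons.mp hch').1
      exact h1 _ (by rw [List.head?_eq_head hsne]; rfl)
    have hlastz : G.Adj (s.getLast hsne) z := by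
      have h1 := hcl' (List.cons_ne_nil z s)
      rwa [List.getLast_cons hsne] at h1
    obtain ⟨y, hyadj, hyh, hyl⟩ : ∃ y, G.Adj z y ∧ y ≠ s.head hsne ∧ y ≠ s.getLast hsne := by
      have h1 := ncard_diff_singleton_ge (s := {u | G.Adj z u}) (s.head hsne)
      have h2 := ncard_diff_singleton_ge (s := {u | G.Adj z u} \ {s.head hsne}) (s.getLast hsne)
      have h3 := hdeg3 z
      obtain ⟨y, hy⟩ := Set.nonempty_of_ncard_ne_zero
        (s := ({u | G.Adj z u} \ {s.head hsne}) \ {s.getLast hsne}) (by omega)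
      exact ⟨y, hy.1.1, by simpa using hy.1.2, by simpa using hy.2⟩
    have hyA : y ∉ A := hnbrA y hyadj
    have hyz : y ≠ z := hyadj.ne'
    have hzreach : ∃ a ∈ A, G.Reachable a z := hZreach z hzZ
    have hQlenZ : ∀ l, Q l → ¬ l.length < s.length + 1 := by
      intro l hQl hcon
      have := hminZ l hQl
      have hZlen : Z.length = s.length + 1 := by
        rw [← hlenZ']; simp
      omega
    by_cases hys : y ∈ s
    · -- CHORD case: a shorter cycle
      obtain ⟨⟨j, hj⟩, hjget⟩ := List.mem_iff_get.mp hys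
      have hj0 : j ≠ 0 := by
        intro hcon; subst hcon
        rw [List.get_mk_zero] at hjget
        exact hyh hjget.symm
      have hjlast : j ≠ s.length - 1 := by
        intro hcon
        apply hyl
        rw [← hjget, List.getLast_eq_getElem, List.get_eq_getElem]
        congr 1
      have hdropC : s.drop j = y :: s.drop (j+1) := by
        conv_lhs => rw [List.drop_eq_getElem_cons hj]
        rw [← hjget, List.get_eq_getElem]
      have hdropne : s.drop j ≠ [] := by rw [hdropC]; simp
      set C : List V := z :: s.drop j with hC
      have hCcyc : IsCyc G C := by
        refine ⟨?_, ?_, ?_, ?_⟩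
        · simp only [hC, List.length_cons, List.length_drop]; omega
        · rw [List.nodup_cons]
          exact ⟨fun hmem => hzs (List.drop_subset _ _ hmem), hsnd.sublist (List.drop_sublist _ _)⟩
        · refine List.isChain_cons.mpr ?_
          refine ⟨?_, hchs.drop _⟩
          intro w hw
          rw [hdropC] at hw
          simp only [List.head?_cons, Option.mem_some_iff] at hw
          rw [← hw]
          exact hyadj
        · intro hne''
          have h1 : C.getLast hne'' = s.getLast hsne := by
            refine getLast_congr hne'' ?_
            rw [hC, hdropC, List.getLast?_cons_cons, ← hdropC,
              List.getLast?_eq_getLast hdropne, List.getLast_drop]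
          rw [h1]
          exact hlastz
      have hQC : Q C := by
        refine ⟨hCcyc, ?_, z, by simp [hC], hzreach⟩
        intro x hx
        rcases List.mem_cons.mp hx with rfl | hx
        · exact hzA
        · exact hsA x (List.drop_subset _ _ hx)
      exact hQlenZ C hQC (by simp only [hC, List.length_cons, List.length_drop]; omega)
    · -- y is outside the cycle
      set X : Set V := {v | v ∉ A ∧ v ≠ z} with hX
      have hyX : y ∈ X := ⟨hyA, hyz⟩
      have hmemX : ∀ v, v ∈ X → v ∉ s → v ∉ Bd := by
        intro v hvX hvs hvBd
        have hvZ := hBdZ v hvBd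
        rcases List.mem_cons.mp ((hmemZ' v).mpr hvZ) with rfl | hvs'
        · exact hvX.2 rfl
        · exact hvs hvs'
      have hnbr2 : ∀ v, v ∈ X → v ∉ s → 2 ≤ {u | u ∈ X ∧ G.Adj v u}.ncard := by
        intro v hvX hvs
        have hvBd := hmemX v hvX hvs
        have hnbrA' : ∀ u, G.Adj v u → u ∉ A := fun u hadj huA =>
          hvBd ⟨hvX.1, u, huA, hadj.symm⟩
        have hsub : {u | G.Adj v u} \ {z} ⊆ {u | u ∈ X ∧ G.Adj v u} := by
          rintro u ⟨hadj, huz⟩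
          exact ⟨⟨hnbrA' u hadj, by simpa using huz⟩, hadj⟩
        have h1 := ncard_diff_singleton_ge (s := {u | G.Adj v u}) z
        have h2 := Set.ncard_le_ncard hsub (Set.toFinite _)
        have h3 := hdeg3 v
        omega
      by_cases hreachS : ∃ t, ReachIn G X y t ∧ t ∈ s
      · -- PATH case
        obtain ⟨t, hreacht, hts⟩ := hreachS
        obtain ⟨L, hLch, hLnd, hLX, hLne, hLhead, hLlast⟩ := reachIn_pathlist hreacht
        obtain ⟨P, hPne, hPch, hPnd, hPsubL, hPhead, hPlast, hPdrop⟩ :=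
          trim_to_first {x | x ∈ s} L hLne hLch hLnd (by rw [hLlast]; exact hts)
        have hPX : ∀ x ∈ P, x ∈ X := fun x hx => hLX x (hPsubL x hx)
        have hPheady : P.head hPne = y := by rw [hPhead, hLhead]
        have ht's : P.getLast hPne ∈ s := hPlast
        obtain ⟨⟨j, hj⟩, hjget⟩ := List.mem_iff_get.mp ht's
        have hPs : ∀ x ∈ P, x ∈ s → x = P.getLast hPne := by
          intro x hx hxs
          rcases mem_eq_dropLast_or_getLast hPne hx with hdl | hl
          · exact absurd hxs (hPdrop x hdl)
          · exact hl
        have hyt' : y ≠ P.getLast hPne := fun hcon => hys (hcon ▸ ht's)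
        have hPlen2 : 2 ≤ P.length :=
          two_le_length_of_head_ne_getLast hPne (by rw [hPheady]; exact hyt')
        have hzP : z ∉ P := fun hmem => (hPX z hmem).2 rfl
        have hPA : ∀ x ∈ P, x ∉ A := fun x hx => (hPX x hx).1
        have hPhead? : P.head? = some y := by rw [List.head?_eq_head hPne, hPheady]
        have hzPlast? : (z :: P).getLast? = some (P.getLast hPne) := by
          rw [List.getLast?_eq_getLast (List.cons_ne_nil _ _), List.getLast_cons hPne]
        have hdisjTD : ∀ (n : ℕ) (x : V), x ∈ s.take n → x ∈ s.drop n → False := by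
          intro n x h1 h2
          have hnd2 : (s.take n ++ s.drop n).Nodup := by
            rw [List.take_append_drop]; exact hsnd
          exact (List.nodup_append'.mp hnd2).2.2 h1 h2
        have hgetj_drop : s.get ⟨j, hj⟩ ∈ s.drop j := by
          rw [List.drop_eq_getElem_cons hj, List.get_eq_getElem]
          exact List.mem_cons_self
        have hgetj_take : s.get ⟨j, hj⟩ ∈ s.take (j+1) := by
          apply List.mem_take_iff_getElem.mpr
          refine ⟨j, by simp; omega, by rw [List.get_eq_getElem]⟩
        have ht'take : P.getLast hPne ∉ s.take j := by
          intro hmem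
          exact hdisjTD j _ hmem (hjget ▸ hgetj_drop)
        have ht'drop : P.getLast hPne ∉ s.drop (j+1) := by
          intro hmem
          exact hdisjTD (j+1) _ (hjget ▸ hgetj_take) hmem
        have hchzP : (z :: P).Chain' G.Adj := by
          refine List.isChain_cons.mpr ?_
          refine ⟨?_, hPch⟩
          intro w hw
          rw [hPhead?] at hw
          simp only [Option.mem_some_iff] at hw
          rw [← hw]
          exact hyadj
        set C1 : List V := (z :: P) ++ s.drop (j+1) with hC1
        set C2 : List V := (z :: P) ++ (s.take j).reverse with hC2
        have hheadC1 : ∀ (hne'' : C1 ≠ []), C1.head hne'' = z := fun _ => rfl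
        have hheadC2 : ∀ (hne'' : C2 ≠ []), C2.head hne'' = z := fun _ => rfl
        have hgetlast_j : j = s.length - 1 → s.get ⟨j, hj⟩ = s.getLast hsne := by
          intro hj'
          rw [List.getLast_eq_getElem, List.get_eq_getElem]
          congr 1
        -- C1 is a cycle
        have hcyc1 : IsCyc G C1 := by
          refine ⟨?_, ?_, ?_, ?_⟩
          · simp only [hC1, List.length_append, List.length_cons]; omega
          · rw [hC1, List.nodup_append']
            refine ⟨List.nodup_cons.mpr ⟨hzP, hPnd⟩, hsnd.sublist (List.drop_sublist _ _), ?_⟩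
            intro x hx hx'
            have hxs : x ∈ s := List.drop_subset _ _ hx'
            rcases List.mem_cons.mp hx with rfl | hxP
            · exact hzs hxs
            · exact ht'drop ((hPs x hxP hxs) ▸ hx')
          · rw [hC1]; refine List.isChain_append.mpr ?_
            refine ⟨hchzP, hchs.drop _, ?_⟩
            intro x hx w hw
            rw [hzPlast?] at hx
            simp only [Option.mem_some_iff] at hx
            by_cases hj1 : j + 1 < s.length
            · rw [List.drop_eq_getElem_cons hj1] at hw
              simp only [List.head?_cons, Option.mem_some_iff] at hw
              rw [← hx, ← hw, ← hjget]
              have hadj := List.isChain_iff_getElem.mp hchs j (by omega)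
              simpa [List.get_eq_getElem] using hadj
            · rw [List.drop_eq_nil_of_le (by omega)] at hw
              simp at hw
          · intro hne''
            rw [hheadC1 hne'']
            have h1 : C1.getLast hne'' = s.getLast hsne := by
              refine getLast_congr hne'' ?_
              by_cases hj1 : j + 1 < s.length
              · have hdne : s.drop (j+1) ≠ [] := by
                  intro hcon
                  have h2 := List.length_drop (i := j+1) (l := s)
                  rw [hcon] at h2; simp at h2; omega
                rw [hC1, List.getLast?_append, List.getLast?_eq_getLast hdne,
                  List.getLast_drop]
                rfl
              · have hdnil : s.drop (j+1) = [] := List.drop_eq_nil_of_le (by omega)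
                rw [hC1, List.getLast?_append, hdnil]
                simp only [List.getLast?_nil, Option.none_or]
                rw [hzPlast?, ← hjget, hgetlast_j (by omega)]
            rw [h1]
            exact hlastz
        -- C2 is a cycle
        have hflip : (flip G.Adj) = G.Adj := by
          ext a b
          exact ⟨fun h' => h'.symm, fun h' => h'.symm⟩
        have hcyc2 : IsCyc G C2 := by
          refine ⟨?_, ?_, ?_, ?_⟩
          · simp only [hC2, List.length_append, List.length_cons]; omega
          · rw [hC2, List.nodup_append']
            refine ⟨List.nodup_cons.mpr ⟨hzP, hPnd⟩,
              List.nodup_reverse.mpr (hsnd.sublist (List.take_sublist _ _)), ?_⟩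
            intro x hx hx'
            rw [List.mem_reverse] at hx'
            have hxs : x ∈ s := List.take_subset _ _ hx'
            rcases List.mem_cons.mp hx with rfl | hxP
            · exact hzs hxs
            · exact ht'take ((hPs x hxP hxs) ▸ hx')
          · rw [hC2]; refine List.isChain_append.mpr ?_
            refine ⟨hchzP, List.isChain_reverse.mpr ((hchs.take _).imp fun _ _ h' => h'.symm), ?_⟩
            intro x hx w hw
            rw [hzPlast?] at hx
            simp only [Option.mem_some_iff] at hx
            by_cases hj0 : 0 < j
            · have htne : s.take j ≠ [] := by
                intro hcon
                have h2 := List.length_take (i := j) (l := s)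
                rw [hcon] at h2; simp at h2; omega
              have hrne : (s.take j).reverse ≠ [] := by simpa using htne
              rw [List.head?_eq_head hrne] at hw
              simp only [Option.mem_some_iff] at hw
              have hhr : (s.take j).reverse.head hrne = (s.take j).getLast htne :=
                List.head_reverse hrne
              have hgl : (s.take j).getLast htne = s.get ⟨j-1, by omega⟩ := by
                rw [List.getLast_eq_getElem, List.getElem_take, List.get_eq_getElem]
                congr 1
                rw [List.length_take]
                show min j s.length - 1 = j - 1
                omega
              have hadj := List.isChain_iff_getElem.mp hchs (j-1) (by omega)
              have hidx : (⟨j-1+1, by omega⟩ : Fin s.length) = ⟨j, hj⟩ := by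
                apply Fin.ext
                show j - 1 + 1 = j
                omega
              rw [← hw, hhr, hgl, ← hx, ← hjget]
              have hadj' : G.Adj (s.get ⟨j-1, by omega⟩) (s.get ⟨j, hj⟩) := by
                rw [← hidx]
                exact hadj
              exact hadj'.symm
            · have htnil : s.take j = [] := by
                have : j = 0 := by omega
                rw [this]; rfl
              rw [htnil] at hw
              simp at hw
          · intro hne''
            rw [hheadC2 hne'']
            have h1 : C2.getLast hne'' = s.head hsne := by
              refine getLast_congr hne'' ?_
              by_cases hj0 : 0 < j
              · have htne : s.take j ≠ [] := by
                  intro hcon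
                  have h2 := List.length_take (i := j) (l := s)
                  rw [hcon] at h2; simp at h2; omega
                have hrne : (s.take j).reverse ≠ [] := by simpa using htne
                have h6 : (s.take j).head htne = s.head hsne := by
                  obtain ⟨sh, st, rfl⟩ : ∃ sh st, s = sh :: st := by
                    cases s with
                    | nil => exact absurd rfl hsne
                    | cons sh st => exact ⟨sh, st, rfl⟩
                  obtain ⟨k, rfl⟩ : ∃ k, j = k + 1 := ⟨j - 1, by omega⟩
                  have h7 : (((sh :: st)).take (k+1)).head? = some sh := by
                    rw [List.take_succ_cons]; rfl
                  rw [List.head?_eq_head htne] at h7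
                  exact Option.some_injective _ h7
                rw [hC2, List.getLast?_append, List.getLast?_eq_getLast hrne,
                  List.getLast_reverse, h6]
                rfl
              · have hj0' : j = 0 := by omega
                subst hj0'
                rw [hC2, show s.take 0 = [] from rfl]
                simp only [List.reverse_nil, List.append_nil]
                rw [hzPlast?, ← hjget, List.get_mk_zero]
            rw [h1]
            exact hzhead.symm
        have hC1A : ∀ x ∈ C1, x ∉ A := by
          intro x hx
          rcases List.mem_append.mp hx with h1 | h2
          · rcases List.mem_cons.mp h1 with rfl | hxP
            · exact hzA
            · exact hPA x hxP
          · exact hsA x (List.drop_subset _ _ h2)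
        have hC2A : ∀ x ∈ C2, x ∉ A := by
          intro x hx
          rcases List.mem_append.mp hx with h1 | h2
          · rcases List.mem_cons.mp h1 with rfl | hxP
            · exact hzA
            · exact hPA x hxP
          · exact hsA x (List.take_subset _ _ (List.mem_reverse.mp h2))
        have hzC1 : z ∈ C1 := by rw [hC1]; simp
        have hzC2 : z ∈ C2 := by rw [hC2]; simp
        have hBdmem : ∀ (C : List V), IsCyc G C → (∀ x ∈ C, x ∉ A) → z ∈ C →
            ∀ u ∈ Bd, u ∉ C → False := by
          intro C hcycC hCA hzC u hu hun
          exact claimA u hu C hcycC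
            (fun x hx => ⟨hCA x hx, fun hcon => hun (hcon ▸ hx)⟩)
            ⟨z, hzC, hzreach⟩
        have hBdt' : ∀ u ∈ Bd, u = P.getLast hPne := by
          intro u hu
          have huZ : u ∈ Z := hBdZ u hu
          have hus : u ∈ s := by
            rcases List.mem_cons.mp ((hmemZ' u).mpr huZ) with rfl | h'
            · exact absurd hu hzBd
            · exact h'
          have huC1 : u ∈ C1 := by
            by_contra hcon
            exact hBdmem C1 hcyc1 hC1A hzC1 u hu hcon
          have huC2 : u ∈ C2 := by
            by_contra hcon
            exact hBdmem C2 hcyc2 hC2A hzC2 u hu hcon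
          have h1 : u = P.getLast hPne ∨ u ∈ s.drop (j+1) := by
            rcases List.mem_append.mp huC1 with h1 | h2
            · rcases List.mem_cons.mp h1 with rfl | hP'
              · exact absurd hu hzBd
              · exact Or.inl (hPs u hP' hus)
            · exact Or.inr h2
          have h2 : u = P.getLast hPne ∨ u ∈ s.take j := by
            rcases List.mem_append.mp huC2 with h1' | h2'
            · rcases List.mem_cons.mp h1' with rfl | hP'
              · exact absurd hu hzBd
              · exact Or.inl (hPs u hP' hus)
            · exact Or.inr (List.mem_reverse.mp h2')
          rcases h1 with h1 | h1
          · exact h1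
          rcases h2 with h2 | h2
          · exact h2
          exfalso
          refine hdisjTD j u h2 ?_
          rw [List.drop_eq_getElem_cons hj]
          exact List.mem_cons_of_mem _ h1
        obtain ⟨u₁, u₂, hu₁, hu₂, hu12⟩ := hBd2
        exact hu12 ((hBdt' u₁ hu₁).trans (hBdt' u₂ hu₂).symm)
      · -- TRAPPED case
        have hdegX : ∀ v, ReachIn G X y v → 2 ≤ {u | u ∈ X ∧ G.Adj v u}.ncard := by
          intro v hv
          exact hnbr2 v (reachIn_right hv) (fun hmem => hreachS ⟨v, hv, hmem⟩)
        obtain ⟨l, hlcyc, hlW⟩ := class_cycle hyX hdegX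
        obtain ⟨u₁, u₂, hu₁, hu₂, hu12⟩ := hBd2
        refine claimA u₁ hu₁ l hlcyc ?_ ?_
        · intro x hx
          have hxX : x ∈ X := reachIn_right (hlW x hx)
          have hxs : x ∉ s := fun hmem => hreachS ⟨x, hlW x hx, hmem⟩
          refine ⟨hxX.1, ?_⟩
          intro hcon; subst hcon
          exact (hmemX x hxX hxs) hu₁
        · obtain ⟨x, hx⟩ : ∃ x, x ∈ l := by
            obtain ⟨hlen3, _, _, _⟩ := hlcyc
            cases l with
            | nil => simp at hlen3
            | cons x t => exact ⟨x, by simp⟩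
          obtain ⟨aa, haaA, hraa⟩ := hzreach
          exact ⟨x, hx, aa, haaA,
            (hraa.trans hyadj.reachable).trans (reachIn_reachable (hlW x hx))⟩
  -- endgame: build the model
  obtain ⟨c, d, e, rest, rfl⟩ : ∃ c d e rest, Z = c :: d :: e :: rest := by
    have hlen3 := hZcyc.1
    match Z, hlen3 with
    | c :: d :: e :: rest, _ => exact ⟨c, d, e, rest, rfl⟩
  have hch := hZcyc.2.2.1
  have hnd := hZcyc.2.1
  have hcd : G.Adj c d := (List.isChain_cons_cons.mp hch).1
  have hch2 : (d :: e :: rest).Chain' G.Adj := (List.isChain_cons_cons.mp hch).2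
  have hde : G.Adj d e := (List.isChain_cons_cons.mp hch2).1
  have hch3 : (e :: rest).Chain' G.Adj := (List.isChain_cons_cons.mp hch2).2
  have hERne : (e :: rest : List V) ≠ [] := List.cons_ne_nil _ _
  have hlastZ : (c :: d :: e :: rest).getLast (List.cons_ne_nil _ _) =
      (e :: rest).getLast hERne := by
    rw [List.getLast_cons (List.cons_ne_nil _ _), List.getLast_cons hERne]
  have hclose : G.Adj ((e :: rest).getLast hERne) c := by
    have := hZcyc.2.2.2 (List.cons_ne_nil _ _)
    rwa [hlastZ] at this
  -- membership and distinctness facts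
  have hdomBd : ∀ x ∈ (c :: d :: e :: rest : List V), ∃ a ∈ A, G.Adj x a := by
    intro x hx
    obtain ⟨_, a, haA, hadj⟩ := hZBd x hx
    exact ⟨a, haA, hadj.symm⟩
  have hcdne : c ≠ d := by
    intro hcon; rw [List.nodup_cons] at hnd; exact hnd.1 (by simp [hcon])
  have hcER : c ∉ (e :: rest : List V) := by
    rw [List.nodup_cons] at hnd
    intro hcon; exact hnd.1 (by simp [hcon])
  have hdER : d ∉ (e :: rest : List V) :=
    (List.nodup_cons.mp (List.nodup_cons.mp hnd).2).1
  refine ⟨![A, {x | x ∈ (e :: rest : List V)}, {d}, {c}], ?_, ?_, ?_, ?_⟩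
  · intro i
    fin_cases i
    · exact hAne
    · exact ⟨e, by simp⟩
    · exact ⟨d, rfl⟩
    · exact ⟨c, rfl⟩
  · have h01 : Disjoint A {x : V | x ∈ (e :: rest : List V)} :=
      Set.disjoint_left.mpr fun x hxA hxS =>
        hZA x (List.mem_cons_of_mem c (List.mem_cons_of_mem d hxS)) hxA
    have h02 : Disjoint A ({d} : Set V) :=
      Set.disjoint_left.mpr fun x hxA hxS => hZA x (by rw [hxS]; simp) hxA
    have h03 : Disjoint A ({c} : Set V) :=
      Set.disjoint_left.mpr fun x hxA hxS => hZA x (by rw [hxS]; simp) hxA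
    have h12 : Disjoint {x : V | x ∈ (e :: rest : List V)} ({d} : Set V) :=
      Set.disjoint_left.mpr fun x hxS hxd => hdER (by rw [← hxd]; exact hxS)
    have h13 : Disjoint {x : V | x ∈ (e :: rest : List V)} ({c} : Set V) :=
      Set.disjoint_left.mpr fun x hxS hxc => hcER (by rw [← hxc]; exact hxS)
    have h23 : Disjoint ({d} : Set V) ({c} : Set V) :=
      Set.disjoint_left.mpr fun x hxd hxc => hcdne (by rw [← hxc, ← hxd])
    intro i j hij
    fin_cases i <;> fin_cases j
    · exact absurd rfl hij
    · exact h01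
    · exact h02
    · exact h03
    · exact h01.symm
    · exact absurd rfl hij
    · exact h12
    · exact h13
    · exact h02.symm
    · exact h12.symm
    · exact absurd rfl hij
    · exact h23
    · exact h03.symm
    · exact h13.symm
    · exact h23.symm
    · exact absurd rfl hij
  · intro i
    fin_cases i
    · exact connected_of_reachIn hAne hAconn
    · refine connected_of_reachIn ⟨e, by simp⟩ ?_
      intro x hx y hy
      exact chain_reachIn hch3 hx hy
    · refine connected_of_reachIn ⟨d, rfl⟩ ?_
      rintro x rfl y rfl
      exact reachIn_refl rfl
    · refine connected_of_reachIn ⟨c, rfl⟩ ?_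
      rintro x rfl y rfl
      exact reachIn_refl rfl
  · intro i j hij v hv
    fin_cases i <;> fin_cases j <;> simp only [Fin.mk_lt_mk] at hij <;> try omega
    · -- (0,1)
      have hvER : v ∈ (e :: rest : List V) := hv
      obtain ⟨a, haA, hadj⟩ :=
        hdomBd v (List.mem_cons_of_mem c (List.mem_cons_of_mem d hvER))
      exact ⟨a, haA, hadj⟩
    · -- (0,2)
      have hvd : v = d := hv
      subst hvd
      obtain ⟨a, haA, hadj⟩ := hdomBd v (by simp)
      exact ⟨a, haA, hadj⟩
    · -- (0,3)
      have hvc : v = c := hv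
      subst hvc
      obtain ⟨a, haA, hadj⟩ := hdomBd v (by simp)
      exact ⟨a, haA, hadj⟩
    · -- (1,2)
      have hvd : v = d := hv
      subst hvd
      exact ⟨e, by simp, hde⟩
    · -- (1,3)
      have hvc : v = c := hv
      subst hvc
      exact ⟨(e :: rest).getLast hERne, List.getLast_mem hERne, hclose.symm⟩
    · -- (2,3)
      have hvc : v = c := hv
      subst hvc
      exact ⟨d, rfl, hcd⟩
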